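/- For every x > 0 one has 2·∫_0^{φ(x)} e^{−x(e^{−u}+u)} du = ∫_1^∞ ξ(t)·e^{−xt} dt. -/

import Mathlib

open MeasureTheory Filter Set

/-- `2·∫_0^{φ(x)} e^{−x(e^{−u}+u)} du = ∫_1^∞ ξ(t)·e^{−xt} dt` for every
`x > 0`.  Here `m` is the median of the gamma distribution, `φ(x) = log (x / m x)`,
`u t ≤ 0 ≤ v t` are the two solutions of `e^{-s} + s = t` for `t ≥ 1`, and
`ξ(t) = 1/(1 − e^{-v t}) + 1/(1 − e^{-u t})` for `t > 1`. -/
theorem gammaMedian_key_identity (m u v ξ : ℝ → ℝ)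
    (hm : ∀ x > (0:ℝ), 0 < m x ∧
      (∫ t in Set.Ioc (0:ℝ) (m x), Real.exp (-t) * t ^ (x - 1)) =
        (1/2) * ∫ t in Set.Ioi (0:ℝ), Real.exp (-t) * t ^ (x - 1))
    (hu : ∀ t ≥ (1:ℝ), u t ≤ 0 ∧ Real.exp (-(u t)) + u t = t)
    (hv : ∀ t ≥ (1:ℝ), 0 ≤ v t ∧ Real.exp (-(v t)) + v t = t)
    (hξ : ∀ t > (1:ℝ),
      ξ t = 1/(1 - Real.exp (-(v t))) + 1/(1 - Real.exp (-(u t)))) :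
    ∀ x > (0:ℝ),
      2 * (∫ s in (0:ℝ)..(Real.log (x / m x)), Real.exp (-x * (Real.exp (-s) + s))) =
        ∫ t in Set.Ioi (1:ℝ), ξ t * Real.exp (-x * t) := by

  intro x hx
  obtain ⟨hm0, hmed⟩ := hm x hx
  set φ := Real.log (x / m x) with hφ
  set f : ℝ → ℝ := fun s => Real.exp (-s) + s with hfdef
  set G : ℝ → ℝ := fun s => x * Real.exp (-s) with hGdef
  set I : ℝ → ℝ := fun t => Real.exp (-t) * t ^ (x - 1) with hIdef
  set E : ℝ → ℝ := fun s => Real.exp (-x * (Real.exp (-s) + s)) with hEdef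
  set c : ℝ := x ^ x with hcdef
  have hc : 0 < c := Real.rpow_pos_of_pos hx x
  -- derivative of f
  have hfderiv : ∀ s : ℝ, HasDerivAt f (1 - Real.exp (-s)) s := by
    intro s
    have h1 : HasDerivAt (fun s : ℝ => Real.exp (-s)) (-Real.exp (-s)) s := by
      simpa [Function.comp_def] using (Real.hasDerivAt_exp (-s)).comp s (hasDerivAt_neg s)
    have := h1.add (hasDerivAt_id s)
    rw [hfdef]
    exact this.congr_deriv (by ring)
  have hfderiv' : ∀ s : ℝ, deriv f s = 1 - Real.exp (-s) := fun s => (hfderiv s).deriv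
  -- monotonicity
  have hfc : Continuous f := by fun_prop
  have hmono : StrictMonoOn f (Ici 0) := by
    apply strictMonoOn_of_deriv_pos (convex_Ici 0) hfc.continuousOn
    intro s hs
    rw [interior_Ici] at hs
    rw [hfderiv' s]
    have : Real.exp (-s) < 1 := Real.exp_lt_one_iff.mpr (by linarith [mem_Ioi.mp hs])
    linarith
  have hanti : StrictAntiOn f (Iic 0) := by
    apply strictAntiOn_of_deriv_neg (convex_Iic 0) hfc.continuousOn
    intro s hs
    rw [interior_Iic] at hs
    rw [hfderiv' s]
    have : 1 < Real.exp (-s) := by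
      have := Real.exp_lt_exp.mpr (show (0:ℝ) < -s by simpa using mem_Iio.mp hs)
      simpa using this
    linarith
  have hf0 : f 0 = 1 := by simp [hfdef]
  have hf_gt : ∀ s ∈ Ioi (0:ℝ), 1 < f s := by
    intro s hs
    have := hmono (self_mem_Ici) (le_of_lt (mem_Ioi.mp hs)) (mem_Ioi.mp hs)
    rwa [hf0] at this
  have hf_gt' : ∀ s ∈ Iio (0:ℝ), 1 < f s := by
    intro s hs
    have := hanti (le_of_lt (mem_Iio.mp hs)) (self_mem_Iic) (mem_Iio.mp hs)
    rwa [hf0] at this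
  -- images of f
  have himgv : f '' Ioi (0:ℝ) = Ioi (1:ℝ) := by
    apply Subset.antisymm
    · rintro _ ⟨s, hs, rfl⟩; exact hf_gt s hs
    · intro t ht
      obtain ⟨hv0, hvt⟩ := hv t (le_of_lt ht)
      have hvpos : 0 < v t := by
        rcases lt_or_eq_of_le hv0 with h | h
        · exact h
        · exfalso; rw [← h] at hvt; simp at hvt; rw [hvt] at ht; exact lt_irrefl _ (mem_Ioi.mp ht)
      exact ⟨v t, hvpos, hvt⟩
  have himgu : f '' Iio (0:ℝ) = Ioi (1:ℝ) := by
    apply Subset.antisymm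
    · rintro _ ⟨s, hs, rfl⟩; exact hf_gt' s hs
    · intro t ht
      obtain ⟨hu0, hut⟩ := hu t (le_of_lt ht)
      have hupos : u t < 0 := by
        rcases lt_or_eq_of_le hu0 with h | h
        · exact h
        · exfalso; rw [h] at hut; simp at hut; rw [hut] at ht; exact lt_irrefl _ (mem_Ioi.mp ht)
      exact ⟨u t, hupos, hut⟩
  -- inverse identities
  have hvf : ∀ s ∈ Ioi (0:ℝ), v (f s) = s := by
    intro s hs
    have h1 : 1 < f s := hf_gt s hs
    obtain ⟨hv0, hvt⟩ := hv (f s) (le_of_lt h1)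
    exact hmono.injOn hv0 (le_of_lt (mem_Ioi.mp hs)) hvt
  have huf : ∀ s ∈ Iio (0:ℝ), u (f s) = s := by
    intro s hs
    have h1 : 1 < f s := hf_gt' s hs
    obtain ⟨hu0, hut⟩ := hu (f s) (le_of_lt h1)
    exact hanti.injOn hu0 (le_of_lt (mem_Iio.mp hs)) hut
  -- key pointwise identity for the G substitution
  have hE : ∀ s : ℝ, (x * Real.exp (-s)) * I (x * Real.exp (-s)) = c * E s := by
    intro s
    have h1 : (0:ℝ) < x * Real.exp (-s) := by positivity
    have h2 : (x * Real.exp (-s)) ^ x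
        = (x * Real.exp (-s)) ^ (x - 1) * (x * Real.exp (-s)) := by
      have := Real.rpow_add h1 (x - 1) 1
      rwa [sub_add_cancel, Real.rpow_one] at this
    have h3 : (x * Real.exp (-s)) ^ x = c * Real.exp (-s * x) := by
      rw [Real.mul_rpow (le_of_lt hx) (le_of_lt (Real.exp_pos _)), ← Real.exp_mul, hcdef]
    simp only [hIdef, hEdef]
    rw [show Real.exp (-(x * Real.exp (-s))) * (x * Real.exp (-s)) ^ (x - 1) =
      (x * Real.exp (-s)) ^ (x-1) * Real.exp (-(x * Real.exp (-s))) from mul_comm _ _]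
    rw [show x * Real.exp (-s) * ((x * Real.exp (-s)) ^ (x - 1) * Real.exp (-(x * Real.exp (-s))))
      = ((x * Real.exp (-s)) ^ (x - 1) * (x * Real.exp (-s))) * Real.exp (-(x * Real.exp (-s))) by ring]
    rw [← h2, h3, mul_assoc, ← Real.exp_add]
    ring_nf
  -- G substitution: integrals of E over half lines
  have hGderiv : ∀ s : ℝ, HasDerivAt G (-(x * Real.exp (-s))) s := by
    intro s
    have h1 : HasDerivAt (fun s : ℝ => Real.exp (-s)) (-Real.exp (-s)) s := by
      simpa [Function.comp_def] using (Real.hasDerivAt_exp (-s)).comp s (hasDerivAt_neg s)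
    simpa [hGdef, mul_comm] using h1.const_mul x
  have hGinj : Function.Injective G := by
    intro a b hab
    simp only [hGdef] at hab
    have := mul_left_cancel₀ (ne_of_gt hx) hab
    have := Real.exp_injective this
    linarith
  have hGimg1 : G '' Ioi (0:ℝ) = Ioo 0 x := by
    apply Subset.antisymm
    · rintro _ ⟨s, hs, rfl⟩
      constructor
      · positivity
      · have : Real.exp (-s) < 1 := Real.exp_lt_one_iff.mpr (by linarith [mem_Ioi.mp hs])
        calc x * Real.exp (-s) < x * 1 := by nlinarith
        _ = x := mul_one x
    · intro t ht
      refine ⟨Real.log (x / t), ?_, ?_⟩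
      · exact Real.log_pos ((one_lt_div ht.1).mpr ht.2)
      · have hxt : (0:ℝ) < x / t := div_pos hx ht.1
        simp only [hGdef]
        rw [Real.exp_neg, Real.exp_log hxt]
        field_simp
  have hGimg2 : G '' Iio (0:ℝ) = Ioi x := by
    apply Subset.antisymm
    · rintro _ ⟨s, hs, rfl⟩
      have : 1 < Real.exp (-s) := by
        have := Real.exp_lt_exp.mpr (show (0:ℝ) < -s by simpa using mem_Iio.mp hs)
        simpa using this
      have : x * 1 < x * Real.exp (-s) := by nlinarith
      simpa using this
    · intro t ht
      have hxt0 : (0:ℝ) < t := lt_trans hx (mem_Ioi.mp ht)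
      refine ⟨Real.log (x / t), ?_, ?_⟩
      · exact Real.log_neg (div_pos hx hxt0) ((div_lt_one hxt0).mpr (mem_Ioi.mp ht))
      · have hxt : (0:ℝ) < x / t := div_pos hx hxt0
        simp only [hGdef]
        rw [Real.exp_neg, Real.exp_log hxt]
        field_simp
  have hGd : ∀ (S : Set ℝ), ∀ s ∈ S, HasDerivWithinAt G (-(x * Real.exp (-s))) S s :=
    fun S s _ => (hGderiv s).hasDerivWithinAt
  have habs : ∀ s : ℝ, |(-(x * Real.exp (-s)))| = x * Real.exp (-s) := by
    intro s; rw [abs_neg, abs_of_pos (by positivity)]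
  -- ∫_{Ioo 0 x} I = c * ∫_{Ioi 0} E  and  ∫_{Ioi x} I = c * ∫_{Iio 0} E
  have hsub1 : ∫ t in Ioo (0:ℝ) x, I t = c * ∫ s in Ioi (0:ℝ), E s := by
    rw [← hGimg1, integral_image_eq_integral_abs_deriv_smul measurableSet_Ioi
      (hGd (Ioi 0)) (hGinj.injOn), ← MeasureTheory.integral_const_mul]
    apply setIntegral_congr_fun measurableSet_Ioi
    intro s _
    simp only [smul_eq_mul, habs s]
    exact hE s
  have hsub2 : ∫ t in Ioi x, I t = c * ∫ s in Iio (0:ℝ), E s := by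
    rw [← hGimg2, integral_image_eq_integral_abs_deriv_smul measurableSet_Iio
      (hGd (Iio 0)) (hGinj.injOn), ← MeasureTheory.integral_const_mul]
    apply setIntegral_congr_fun measurableSet_Iio
    intro s _
    simp only [smul_eq_mul, habs s]
    exact hE s
  -- f substitution
  have hfd : ∀ (S : Set ℝ), ∀ s ∈ S, HasDerivWithinAt f (1 - Real.exp (-s)) S s :=
    fun S s _ => (hfderiv s).hasDerivWithinAt
  have hvinj := hmono.injOn.mono Ioi_subset_Ici_self
  have huinj := hanti.injOn.mono Iio_subset_Iic_self
  have hEq1 : ∀ s ∈ Ioi (0:ℝ), |1 - Real.exp (-s)| •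
      ((1/(1 - Real.exp (-(v (f s))))) * Real.exp (-x * (f s))) = E s := by
    intro s hs
    have h1 : Real.exp (-s) < 1 := Real.exp_lt_one_iff.mpr (by linarith [mem_Ioi.mp hs])
    rw [hvf s hs, abs_of_pos (by linarith)]
    simp only [smul_eq_mul, hEdef, hfdef]
    have hne : 1 - Real.exp (-s) ≠ 0 := by linarith
    field_simp
  have hEq2 : ∀ s ∈ Iio (0:ℝ), |1 - Real.exp (-s)| •
      ((1/(1 - Real.exp (-(u (f s))))) * Real.exp (-x * (f s))) = -E s := by
    intro s hs
    have h1 : 1 < Real.exp (-s) := by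
      have := Real.exp_lt_exp.mpr (show (0:ℝ) < -s by simpa using mem_Iio.mp hs)
      simpa using this
    rw [huf s hs, abs_of_neg (by linarith)]
    simp only [smul_eq_mul, hEdef, hfdef]
    have hne : 1 - Real.exp (-s) ≠ 0 := by linarith
    field_simp
  have hsub3 : ∫ t in Ioi (1:ℝ), (1/(1 - Real.exp (-(v t)))) * Real.exp (-x * t)
      = ∫ s in Ioi (0:ℝ), E s := by
    rw [← himgv, integral_image_eq_integral_abs_deriv_smul measurableSet_Ioi (hfd _) hvinj]
    exact setIntegral_congr_fun measurableSet_Ioi (fun s hs => hEq1 s hs)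
  have hsub4 : ∫ t in Ioi (1:ℝ), (1/(1 - Real.exp (-(u t)))) * Real.exp (-x * t)
      = - ∫ s in Iio (0:ℝ), E s := by
    rw [← himgu, integral_image_eq_integral_abs_deriv_smul measurableSet_Iio (hfd _) huinj,
      ← MeasureTheory.integral_neg]
    exact setIntegral_congr_fun measurableSet_Iio (fun s hs => hEq2 s hs)
  -- integrabilities
  have hIint : IntegrableOn I (Ioi (0:ℝ)) := Real.GammaIntegral_convergent hx
  have hEint1 : IntegrableOn E (Ioi (0:ℝ)) := by
    have h0 : IntegrableOn I (G '' Ioi (0:ℝ)) := by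
      rw [hGimg1]; exact hIint.mono_set Ioo_subset_Ioi_self
    have h1 := (integrableOn_image_iff_integrableOn_abs_deriv_smul measurableSet_Ioi
      (hGd _) hGinj.injOn I).mp h0
    have h2 : IntegrableOn (fun s => c * E s) (Ioi (0:ℝ)) := by
      apply h1.congr_fun ?_ measurableSet_Ioi
      intro s _
      simp only [smul_eq_mul, habs s]
      exact hE s
    have h3 : IntegrableOn (fun s => c⁻¹ * (c * E s)) (Ioi (0:ℝ)) := h2.const_mul c⁻¹
    apply h3.congr_fun ?_ measurableSet_Ioi
    intro s _
    show c⁻¹ * (c * E s) = E s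
    rw [← mul_assoc, inv_mul_cancel₀ (ne_of_gt hc), one_mul]
  have hEint2 : IntegrableOn E (Iio (0:ℝ)) := by
    have h0 : IntegrableOn I (G '' Iio (0:ℝ)) := by
      rw [hGimg2]; exact hIint.mono_set (Ioi_subset_Ioi (le_of_lt hx))
    have h1 := (integrableOn_image_iff_integrableOn_abs_deriv_smul measurableSet_Iio
      (hGd _) hGinj.injOn I).mp h0
    have h2 : IntegrableOn (fun s => c * E s) (Iio (0:ℝ)) := by
      apply h1.congr_fun ?_ measurableSet_Iio
      intro s _
      simp only [smul_eq_mul, habs s]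
      exact hE s
    have h3 : IntegrableOn (fun s => c⁻¹ * (c * E s)) (Iio (0:ℝ)) := h2.const_mul c⁻¹
    apply h3.congr_fun ?_ measurableSet_Iio
    intro s _
    show c⁻¹ * (c * E s) = E s
    rw [← mul_assoc, inv_mul_cancel₀ (ne_of_gt hc), one_mul]
  have hg1int : IntegrableOn (fun t => (1/(1 - Real.exp (-(v t)))) * Real.exp (-x * t))
      (Ioi (1:ℝ)) := by
    rw [← himgv, integrableOn_image_iff_integrableOn_abs_deriv_smul measurableSet_Ioi
      (hfd _) hvinj]
    apply hEint1.congr_fun ?_ measurableSet_Ioi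
    intro s hs
    exact (hEq1 s hs).symm
  have hg2int : IntegrableOn (fun t => (1/(1 - Real.exp (-(u t)))) * Real.exp (-x * t))
      (Ioi (1:ℝ)) := by
    rw [← himgu, integrableOn_image_iff_integrableOn_abs_deriv_smul measurableSet_Iio
      (hfd _) huinj]
    have h4 : IntegrableOn (fun s => -E s) (Iio (0:ℝ)) := hEint2.neg
    apply h4.congr_fun ?_ measurableSet_Iio
    intro s hs
    exact (hEq2 s hs).symm
  -- LHS interval substitution
  have hIcont : ContinuousOn I (Ioi (0:ℝ)) := by
    intro t ht
    have h1 : ContinuousAt (fun t : ℝ => t ^ (x - 1)) t :=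
      Real.continuousAt_rpow_const t (x - 1) (Or.inl (ne_of_gt ht))
    exact ((Real.continuous_exp.comp continuous_neg).continuousAt.mul h1).continuousWithinAt
  have hG0 : G 0 = x := by simp [hGdef]
  have hGφ : G φ = m x := by
    simp only [hGdef, hφ]
    rw [Real.exp_neg, Real.exp_log (div_pos hx hm0)]
    field_simp
  have hLHS : ∫ s in (0:ℝ)..φ, E s = c⁻¹ * ∫ t in (m x)..x, I t := by
    have hgc : ContinuousOn (fun t : ℝ => -(c⁻¹ * I t)) (G '' uIcc 0 φ) := by
      apply ((hIcont.const_smul c⁻¹).neg).mono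
      rintro _ ⟨s, _, rfl⟩
      exact mem_Ioi.mpr (by positivity)
    have h := intervalIntegral.integral_comp_smul_deriv' (a := (0:ℝ)) (b := φ)
      (f := G) (f' := fun s => -(x * Real.exp (-s))) (g := fun t => -(c⁻¹ * I t))
      (fun s _ => hGderiv s) (Continuous.continuousOn (by fun_prop)) hgc
    rw [hG0, hGφ] at h
    have h2 : ∀ s, (fun s => -(x * Real.exp (-s))) s •
        ((fun t => -(c⁻¹ * I t)) ∘ G) s = E s := by
      intro s
      simp only [Function.comp_apply, smul_eq_mul]
      have := hE s
      have hcne : c ≠ 0 := ne_of_gt hc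
      field_simp
      nlinarith [hE s]
    rw [intervalIntegral.integral_congr (fun s _ => (h2 s))] at h
    rw [h, intervalIntegral.integral_symm, intervalIntegral.integral_neg,
      intervalIntegral.integral_const_mul]
    ring
  -- splitting set integrals
  have hI0x : IntervalIntegrable I volume 0 x := by
    rw [intervalIntegrable_iff, uIoc_of_le (le_of_lt hx)]
    exact hIint.mono_set Ioc_subset_Ioi_self
  have hI0m : IntervalIntegrable I volume 0 (m x) := by
    rw [intervalIntegrable_iff, uIoc_of_le (le_of_lt hm0)]
    exact hIint.mono_set Ioc_subset_Ioi_self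
  have hsplit : ∫ t in (m x)..x, I t
      = (∫ t in Ioc (0:ℝ) x, I t) - ∫ t in Ioc (0:ℝ) (m x), I t := by
    rw [← intervalIntegral.integral_of_le (le_of_lt hx),
      ← intervalIntegral.integral_of_le (le_of_lt hm0)]
    exact (intervalIntegral.integral_interval_sub_left hI0x hI0m).symm
  have hJ0 : ∫ t in Ioi (0:ℝ), I t = (∫ t in Ioc (0:ℝ) x, I t) + ∫ t in Ioi x, I t := by
    rw [← setIntegral_union (Set.Ioc_disjoint_Ioi le_rfl) measurableSet_Ioi
      (hIint.mono_set Ioc_subset_Ioi_self) (hIint.mono_set (Ioi_subset_Ioi (le_of_lt hx))),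
      Ioc_union_Ioi_eq_Ioi (le_of_lt hx)]
  -- assemble RHS
  have hRHS : ∫ t in Ioi (1:ℝ), ξ t * Real.exp (-x * t)
      = (∫ s in Ioi (0:ℝ), E s) - ∫ s in Iio (0:ℝ), E s := by
    rw [show (∫ t in Ioi (1:ℝ), ξ t * Real.exp (-x * t))
        = ∫ t in Ioi (1:ℝ), ((1/(1 - Real.exp (-(v t)))) * Real.exp (-x * t)
          + (1/(1 - Real.exp (-(u t)))) * Real.exp (-x * t)) from
      setIntegral_congr_fun measurableSet_Ioi
        (fun t ht => by rw [hξ t (mem_Ioi.mp ht)]; ring)]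
    rw [MeasureTheory.integral_add hg1int hg2int, hsub3, hsub4]
    ring
  have hA : ∫ s in Ioi (0:ℝ), E s = c⁻¹ * ∫ t in Ioc (0:ℝ) x, I t := by
    rw [MeasureTheory.integral_Ioc_eq_integral_Ioo, hsub1]
    field_simp
  have hB : ∫ s in Iio (0:ℝ), E s = c⁻¹ * ∫ t in Ioi x, I t := by
    rw [hsub2]
    field_simp
  rw [hRHS, hLHS, hsplit, hA, hB, hmed, hJ0]
  have hcne : c ≠ 0 := ne_of_gt hc
  field_simp
  ring
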